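/- Let m, n, d, i be natural numbers with 0 < d < min(m,n), n ≥ 2d, and i ≥ 1. Then ∑_{j=0}^{d} C(m+n-2d-1, m-j-i) · (-1)^j · C(d,j)·C(n-d+j-1, j) / C(m-1, j) = C(i-1, d) · C(m+n-d-1, m-i) / C(m-1, d), where binomial coefficients C(a,b) with b < 0 or b > a are zero. -/

import Mathlib

open Finset

/-- Binomial coefficient `C(c, k)` with integer lower index, zero when `k < 0`
(and automatically zero when `k > c`), as a rational number. -/
def binomQ (c : ℕ) (k : ℤ) : ℚ := if 0 ≤ k then (c.choose k.toNat : ℚ) else 0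

/-- Generalized binomial coefficient with integer top, natural bottom. -/
def Rq (x : ℤ) (d : ℕ) : ℚ := (∏ t ∈ Finset.range d, ((x : ℚ) - t)) / d.factorial

lemma binomQ_neg {c : ℕ} {k : ℤ} (h : k < 0) : binomQ c k = 0 := by
  simp [binomQ, not_le.2 h]

lemma binomQ_ofNat (c t : ℕ) : binomQ c (t : ℤ) = (c.choose t : ℚ) := by
  simp [binomQ]

lemma binomQ_pascal (c : ℕ) (k : ℤ) : binomQ (c + 1) k = binomQ c k + binomQ c (k - 1) := by
  rcases lt_trichotomy k 0 with h | h | h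
  · rw [binomQ_neg h, binomQ_neg h, binomQ_neg (by omega)]; ring
  · subst h
    rw [binomQ_neg (by norm_num : (0:ℤ)-1 < 0)]
    simp [binomQ]
  · obtain ⟨t, rfl⟩ : ∃ t : ℕ, k = (t : ℤ) + 1 := ⟨(k-1).toNat, by omega⟩
    have h1 : ((t : ℤ) + 1) = ((t + 1 : ℕ) : ℤ) := by push_cast; ring
    have h2 : ((t + 1 : ℕ) : ℤ) - 1 = ((t : ℕ) : ℤ) := by push_cast; ring
    rw [h1, h2, binomQ_ofNat, binomQ_ofNat, binomQ_ofNat, Nat.choose_succ_succ']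
    push_cast; ring

lemma Rq_zero (x : ℤ) : Rq x 0 = 1 := by simp [Rq]

lemma Rq_pascal (x : ℤ) (d : ℕ) : Rq (x + 1) (d + 1) = Rq x (d + 1) + Rq x d := by
  have h1 : ∏ t ∈ range (d + 1), (((x+1 : ℤ) : ℚ) - t)
      = ((x : ℚ) + 1) * ∏ t ∈ range d, ((x : ℚ) - t) := by
    rw [Finset.prod_range_succ', mul_comm]
    have he : ∀ t ∈ range d, (((x+1 : ℤ) : ℚ) - ((t+1 : ℕ) : ℚ)) = ((x:ℚ) - t) := by
      intro t _; push_cast; ring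
    rw [Finset.prod_congr rfl he]
    congr 1
    push_cast; ring
  have h2 : ∏ t ∈ range (d + 1), ((x : ℚ) - t)
      = (∏ t ∈ range d, ((x : ℚ) - t)) * ((x:ℚ) - d) := Finset.prod_range_succ _ _
  have hf : ((d+1).factorial : ℚ) ≠ 0 := by positivity
  have hf2 : ((d).factorial : ℚ) ≠ 0 := by positivity
  rw [Rq, Rq, Rq, h1, h2, Nat.factorial_succ]
  push_cast
  field_simp
  ring

lemma Rq_natCast (n : ℕ) : ∀ d, Rq (n : ℤ) d = (n.choose d : ℚ) := by
  induction n with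
  | zero =>
    intro d
    cases d with
    | zero => simp [Rq_zero]
    | succ e =>
      rw [Rq]
      rw [Finset.prod_eq_zero (Finset.mem_range.2 (Nat.succ_pos e))]
      · simp
      · norm_num
  | succ m ih =>
    intro d
    cases d with
    | zero => simp [Rq_zero]
    | succ e =>
      have h : ((m+1 : ℕ) : ℤ) = (m : ℤ) + 1 := by push_cast; ring
      rw [h, Rq_pascal, ih (e+1), ih e, Nat.choose_succ_succ']
      push_cast; ring

lemma Rq_neg_one (d : ℕ) : Rq (-1) d = (-1)^d := by
  induction d with
  | zero => simp [Rq_zero]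
  | succ e ih =>
    have h : Rq (0:ℤ) (e+1) = Rq (-1) (e+1) + Rq (-1) e := by
      have := Rq_pascal (-1) e; simpa using this
    have h0 : Rq (0:ℤ) (e+1) = 0 := by
      have := Rq_natCast 0 (e+1); simpa using this
    rw [h0, ih] at h
    rw [pow_succ]
    linarith

lemma binomQ_one (t : ℤ) : binomQ 1 t = if t = 0 ∨ t = 1 then 1 else 0 := by
  rcases lt_trichotomy t 0 with h | h | h
  · rw [binomQ_neg h, if_neg (by omega)]
  · subst h; simp [binomQ]
  · obtain ⟨s, rfl⟩ : ∃ s : ℕ, t = (s : ℤ) := ⟨t.toNat, by omega⟩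
    rw [binomQ_ofNat]
    match s with
    | 0 => simp
    | 1 => simp
    | (s+2) =>
      rw [Nat.choose_eq_zero_of_lt (by omega), if_neg (by omega)]
      simp

lemma gclosed (d : ℕ) : ∀ k : ℤ, ∑ j ∈ range (d+1), binomQ 1 (k - (j:ℕ)) * (-1)^j
    = if k = 0 then 1 else if k = (d:ℤ)+1 then (-1)^d else 0 := by
  induction d with
  | zero =>
    intro k
    simp only [zero_add, Finset.sum_range_one, Nat.cast_zero, sub_zero, pow_zero, mul_one,
      binomQ_one]
    split_ifs <;> first | rfl | (exfalso; omega)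
  | succ e ih =>
    intro k
    rw [Finset.sum_range_succ, ih k, binomQ_one]
    split_ifs <;> first | ring1 | (exfalso; omega)

lemma hclosed (d : ℕ) (k : ℤ) : Rq ((d:ℤ) - k) d * binomQ (d+1) k
    = if k = 0 then 1 else if k = (d:ℤ)+1 then (-1)^d else 0 := by
  rcases lt_trichotomy k 0 with h | h | h
  · rw [binomQ_neg h, if_neg (by omega), if_neg (by omega)]; ring
  · subst h
    have h1 : ((d:ℤ) - 0) = ((d:ℕ):ℤ) := by ring
    rw [h1, Rq_natCast, Nat.choose_self]
    have h2 : (0:ℤ) = ((0:ℕ):ℤ) := rfl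
    rw [h2, binomQ_ofNat]
    simp
  · obtain ⟨t, rfl⟩ : ∃ t : ℕ, k = (t : ℤ) := ⟨k.toNat, by omega⟩
    rw [binomQ_ofNat]
    rcases lt_trichotomy t (d+1) with ht | ht | ht
    · have h1 : ((d:ℤ) - t) = ((d - t : ℕ) : ℤ) := by omega
      rw [h1, Rq_natCast, Nat.choose_eq_zero_of_lt (by omega)]
      rw [if_neg (by omega), if_neg (by omega)]
      simp
    · subst ht
      have h1 : ((d:ℤ) - ((d+1:ℕ):ℤ)) = -1 := by push_cast; ring
      rw [h1, Rq_neg_one, Nat.choose_self, if_neg (by omega), if_pos (by push_cast; ring)]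
      simp
    · rw [Nat.choose_eq_zero_of_lt ht, if_neg (by omega), if_neg (by omega)]
      simp

lemma key : ∀ (s a b d : ℕ) (k : ℤ), a + b + d ≤ s →
    ∑ j ∈ Finset.range (d+1), binomQ (a+b+1) (k - (j:ℕ)) * (-1)^j *
      (((b+j).choose j : ℚ) * ((a + d - j).choose (d - j) : ℚ))
    = Rq ((a:ℤ) + (d:ℕ) - k) d * binomQ (a+b+d+1) k := by
  intro s
  induction s with
  | zero =>
    intro a b d k h
    obtain ⟨rfl, rfl, rfl⟩ : a = 0 ∧ b = 0 ∧ d = 0 := by omega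
    simp [Rq_zero, Finset.sum_range_one]
  | succ s ih =>
    intro a b d k h
    rcases Nat.eq_zero_or_pos d with rfl | hdpos
    · simp [Rq_zero, Finset.sum_range_one]
    obtain ⟨e, rfl⟩ : ∃ e, d = e + 1 := ⟨d - 1, by omega⟩
    rcases Nat.eq_zero_or_pos a with rfl | hapos
    · rcases Nat.eq_zero_or_pos b with rfl | hbpos
      · -- base case a = b = 0
        have hs : ∀ j ∈ Finset.range (e+1+1),
            binomQ (0+0+1) (k - (j:ℕ)) * (-1)^j *
              (((0+j).choose j : ℚ) * ((0 + (e+1) - j).choose ((e+1) - j) : ℚ))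
            = binomQ 1 (k - (j:ℕ)) * (-1)^j := by
          intro j hj
          rw [Finset.mem_range] at hj
          have h1 : (0:ℕ)+j = j := by omega
          have h2 : (0:ℕ)+0+1 = 1 := by omega
          rw [h1, h2, Nat.choose_self]
          have h3 : (0 + (e+1) - j).choose ((e+1) - j) = 1 := by
            have : 0 + (e+1) - j = (e+1) - j := by omega
            rw [this, Nat.choose_self]
          rw [h3]
          push_cast; ring
        rw [Finset.sum_congr rfl hs, gclosed (e+1) k]
        have h4 : ((0:ℕ):ℤ) + ((e+1:ℕ):ℤ) - k = ((e+1:ℕ):ℤ) - k := by push_cast; ring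
        have h5 : (0:ℕ)+0+(e+1)+1 = (e+1)+1 := by omega
        rw [h4, h5, hclosed (e+1) k]
      · -- case a = 0, b = b'+1 : recurrence in b
        obtain ⟨b', rfl⟩ : ∃ b', b = b' + 1 := ⟨b - 1, by omega⟩
        rw [Finset.sum_range_succ']
        have hstep : ∀ j ∈ Finset.range (e+1),
            binomQ (0+(b'+1)+1) (k - ((j+1:ℕ):ℤ)) * (-1)^(j+1) *
              (((b'+1+(j+1)).choose (j+1) : ℚ) * ((0 + (e+1) - (j+1)).choose ((e+1) - (j+1)) : ℚ))
            = -(binomQ (0+(b'+1)+1) ((k-1) - (j:ℕ)) * (-1)^j *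
                (((b'+1+j).choose j : ℚ) * ((0 + e - j).choose (e - j) : ℚ)))
            + binomQ (0+(b'+1)+1) (k - ((j+1:ℕ):ℤ)) * (-1)^(j+1) *
                (((b'+(j+1)).choose (j+1) : ℚ) * ((0 + (e+1) - (j+1)).choose ((e+1) - (j+1)) : ℚ)) := by
          intro j hj
          rw [Finset.mem_range] at hj
          have hc : (b'+1+(j+1)).choose (j+1) = (b'+1+j).choose j + (b'+(j+1)).choose (j+1) := by
            have h1 : b'+1+(j+1) = (b'+(j+1))+1 := by omega
            rw [h1, Nat.choose_succ_succ]
            congr 2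
            omega
          have hcs : (0 + (e+1) - (j+1)).choose ((e+1) - (j+1)) = 1 := by
            have : 0 + (e+1) - (j+1) = (e+1) - (j+1) := by omega
            rw [this, Nat.choose_self]
          have hcs2 : (0 + e - j).choose (e - j) = 1 := by
            have : 0 + e - j = e - j := by omega
            rw [this, Nat.choose_self]
          have hk : k - ((j+1:ℕ):ℤ) = (k-1) - (j:ℕ) := by push_cast; ring
          rw [hc, hcs, hcs2, hk]
          push_cast; ring
        rw [Finset.sum_congr rfl hstep, Finset.sum_add_distrib]
        have hf0 : binomQ (0+(b'+1)+1) (k - ((0:ℕ):ℤ)) * (-1)^0 *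
              (((b'+1+0).choose 0 : ℚ) * ((0 + (e+1) - 0).choose ((e+1) - 0) : ℚ))
            = binomQ (0+(b'+1)+1) (k - ((0:ℕ):ℤ)) * (-1)^0 *
              (((b'+0).choose 0 : ℚ) * ((0 + (e+1) - 0).choose ((e+1) - 0) : ℚ)) := by
          rw [Nat.choose_zero_right, Nat.choose_zero_right]
        have hBsum : ∑ j ∈ Finset.range (e+1+1),
            binomQ (0+(b'+1)+1) (k - (j:ℕ)) * (-1)^j *
              (((b'+j).choose j : ℚ) * ((0 + (e+1) - j).choose ((e+1) - j) : ℚ))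
            = (∑ j ∈ Finset.range (e+1),
                binomQ (0+(b'+1)+1) (k - ((j+1:ℕ):ℤ)) * (-1)^(j+1) *
                  (((b'+(j+1)).choose (j+1) : ℚ) * ((0 + (e+1) - (j+1)).choose ((e+1) - (j+1)) : ℚ)))
            + binomQ (0+(b'+1)+1) (k - ((0:ℕ):ℤ)) * (-1)^0 *
                (((b'+0).choose 0 : ℚ) * ((0 + (e+1) - 0).choose ((e+1) - 0) : ℚ)) :=
          Finset.sum_range_succ' _ _
        rw [add_assoc, hf0, ← hBsum]
        have hV : ∀ j ∈ Finset.range (e+1+1),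
            binomQ (0+(b'+1)+1) (k - (j:ℕ)) * (-1)^j *
              (((b'+j).choose j : ℚ) * ((0 + (e+1) - j).choose ((e+1) - j) : ℚ))
            = binomQ (0+b'+1) (k - (j:ℕ)) * (-1)^j *
              (((b'+j).choose j : ℚ) * ((0 + (e+1) - j).choose ((e+1) - j) : ℚ))
            + binomQ (0+b'+1) ((k-1) - (j:ℕ)) * (-1)^j *
              (((b'+j).choose j : ℚ) * ((0 + (e+1) - j).choose ((e+1) - j) : ℚ)) := by
          intro j _
          have hN : (0:ℕ)+(b'+1)+1 = (0+b'+1)+1 := by omega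
          have hk2 : k - (j:ℕ) - 1 = (k-1) - (j:ℕ) := by ring
          rw [hN, binomQ_pascal, hk2]
          ring
        rw [Finset.sum_congr rfl hV, Finset.sum_add_distrib, Finset.sum_neg_distrib]
        rw [ih 0 (b'+1) e (k-1) (by omega), ih 0 b' (e+1) k (by omega),
          ih 0 b' (e+1) (k-1) (by omega)]
        have n1 : (0:ℕ)+(b'+1)+e+1 = 0+b'+(e+1)+1 := by omega
        rw [n1]
        have n2 : (0:ℕ)+(b'+1)+(e+1)+1 = (0+b'+(e+1)+1)+1 := by omega
        rw [n2]
        have c1 : ((0:ℕ):ℤ) + ((e:ℕ):ℤ) - (k-1) = ((0:ℕ):ℤ) + ((e+1:ℕ):ℤ) - k := by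
          push_cast; ring
        have c2 : ((0:ℕ):ℤ) + ((e+1:ℕ):ℤ) - (k-1)
            = (((0:ℕ):ℤ) + ((e+1:ℕ):ℤ) - k) + 1 := by push_cast; ring
        rw [c1, c2]
        have hP1 : binomQ ((0+b'+(e+1)+1)+1) k
            = binomQ (0+b'+(e+1)+1) k + binomQ (0+b'+(e+1)+1) (k-1) := binomQ_pascal _ _
        have hP2 : Rq ((((0:ℕ):ℤ) + ((e+1:ℕ):ℤ) - k) + 1) (e+1)
            = Rq (((0:ℕ):ℤ) + ((e+1:ℕ):ℤ) - k) (e+1)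
              + Rq (((0:ℕ):ℤ) + ((e+1:ℕ):ℤ) - k) e := Rq_pascal _ _
        rw [hP1, hP2]
        ring
    · -- case a = a'+1 : recurrence in a
      obtain ⟨a', rfl⟩ : ∃ a', a = a' + 1 := ⟨a - 1, by omega⟩
      rw [Finset.sum_range_succ]
      have hsum1 : ∀ j ∈ Finset.range (e+1),
          binomQ (a'+1+b+1) (k - (j:ℕ)) * (-1)^j *
            (((b+j).choose j : ℚ) * ((a'+1 + (e+1) - j).choose ((e+1) - j) : ℚ))
          = binomQ (a'+1+b+1) (k - (j:ℕ)) * (-1)^j *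
            (((b+j).choose j : ℚ) * ((a'+1 + e - j).choose (e - j) : ℚ))
          + binomQ (a'+1+b+1) (k - (j:ℕ)) * (-1)^j *
            (((b+j).choose j : ℚ) * ((a' + (e+1) - j).choose ((e+1) - j) : ℚ)) := by
        intro j hj
        rw [Finset.mem_range] at hj
        have hcn : (a'+1+(e+1)-j).choose ((e+1)-j)
            = (a'+1+e-j).choose (e-j) + (a'+(e+1)-j).choose ((e+1)-j) := by
          have h3 : a'+(e+1)-j = a'+1+e-j := by omega
          have h1 : a'+1+(e+1)-j = (a'+1+e-j)+1 := by omega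
          have h2 : (e+1)-j = (e-j)+1 := by omega
          rw [h3, h1, h2, Nat.choose_succ_succ]
        rw [hcn]
        push_cast; ring
      rw [Finset.sum_congr rfl hsum1, Finset.sum_add_distrib]
      have hlast : binomQ (a'+1+b+1) (k - ((e+1:ℕ):ℤ)) * (-1)^(e+1) *
            (((b+(e+1)).choose (e+1) : ℚ) * ((a'+1 + (e+1) - (e+1)).choose ((e+1) - (e+1)) : ℚ))
          = binomQ (a'+1+b+1) (k - ((e+1:ℕ):ℤ)) * (-1)^(e+1) *
            (((b+(e+1)).choose (e+1) : ℚ) * ((a' + (e+1) - (e+1)).choose ((e+1) - (e+1)) : ℚ)) := by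
        have h1 : a'+1+(e+1)-(e+1) = a'+1 := by omega
        have h2 : a'+(e+1)-(e+1) = a' := by omega
        rw [h1, h2, Nat.sub_self, Nat.choose_zero_right, Nat.choose_zero_right]
      have hVsum : ∑ j ∈ Finset.range (e+1+1),
          binomQ (a'+1+b+1) (k - (j:ℕ)) * (-1)^j *
            (((b+j).choose j : ℚ) * ((a' + (e+1) - j).choose ((e+1) - j) : ℚ))
          = (∑ j ∈ Finset.range (e+1),
              binomQ (a'+1+b+1) (k - (j:ℕ)) * (-1)^j *
                (((b+j).choose j : ℚ) * ((a' + (e+1) - j).choose ((e+1) - j) : ℚ)))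
          + binomQ (a'+1+b+1) (k - ((e+1:ℕ):ℤ)) * (-1)^(e+1) *
              (((b+(e+1)).choose (e+1) : ℚ) * ((a' + (e+1) - (e+1)).choose ((e+1) - (e+1)) : ℚ)) :=
        Finset.sum_range_succ _ _
      rw [add_assoc, hlast, ← hVsum]
      have hV : ∀ j ∈ Finset.range (e+1+1),
          binomQ (a'+1+b+1) (k - (j:ℕ)) * (-1)^j *
            (((b+j).choose j : ℚ) * ((a' + (e+1) - j).choose ((e+1) - j) : ℚ))
          = binomQ (a'+b+1) (k - (j:ℕ)) * (-1)^j *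
            (((b+j).choose j : ℚ) * ((a' + (e+1) - j).choose ((e+1) - j) : ℚ))
          + binomQ (a'+b+1) ((k-1) - (j:ℕ)) * (-1)^j *
            (((b+j).choose j : ℚ) * ((a' + (e+1) - j).choose ((e+1) - j) : ℚ)) := by
        intro j _
        have hN : a'+1+b+1 = (a'+b+1)+1 := by omega
        have hk2 : k - (j:ℕ) - 1 = (k-1) - (j:ℕ) := by ring
        rw [hN, binomQ_pascal, hk2]
        ring
      rw [Finset.sum_congr rfl hV, Finset.sum_add_distrib]
      rw [ih (a'+1) b e k (by omega), ih a' b (e+1) k (by omega),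
        ih a' b (e+1) (k-1) (by omega)]
      have n1 : a'+1+b+e+1 = a'+b+(e+1)+1 := by omega
      rw [n1]
      have n2 : a'+1+b+(e+1)+1 = (a'+b+(e+1)+1)+1 := by omega
      rw [n2]
      have c1 : ((a'+1:ℕ):ℤ) + ((e:ℕ):ℤ) - k = ((a':ℕ):ℤ) + ((e+1:ℕ):ℤ) - k := by
        push_cast; ring
      have c2 : ((a':ℕ):ℤ) + ((e+1:ℕ):ℤ) - (k-1)
          = (((a':ℕ):ℤ) + ((e+1:ℕ):ℤ) - k) + 1 := by push_cast; ring
      have c3 : ((a'+1:ℕ):ℤ) + ((e+1:ℕ):ℤ) - k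
          = (((a':ℕ):ℤ) + ((e+1:ℕ):ℤ) - k) + 1 := by push_cast; ring
      rw [c1, c2, c3]
      have hP1 : binomQ ((a'+b+(e+1)+1)+1) k
          = binomQ (a'+b+(e+1)+1) k + binomQ (a'+b+(e+1)+1) (k-1) := binomQ_pascal _ _
      have hP2 : Rq ((((a':ℕ):ℤ) + ((e+1:ℕ):ℤ) - k) + 1) (e+1)
          = Rq (((a':ℕ):ℤ) + ((e+1:ℕ):ℤ) - k) (e+1)
            + Rq (((a':ℕ):ℤ) + ((e+1:ℕ):ℤ) - k) e := Rq_pascal _ _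
      rw [hP1, hP2]
      ring

/-- The binomial identity equivalent to the Pfaff–Saalschütz identity. -/
theorem binomial_pfaff_saalschutz (m n d i : ℕ) (hd : 0 < d) (hdm : d < m) (hdn : d < n)
    (hn : 2 * d ≤ n) (hi : 1 ≤ i) :
    ∑ j ∈ Finset.range (d + 1),
        binomQ (m + n - 2 * d - 1) ((m : ℤ) - j - i) * (-1) ^ j *
          ((d.choose j : ℚ) * ((n - d + j - 1).choose j : ℚ) / ((m - 1).choose j : ℚ)) =
      ((i - 1).choose d : ℚ) * binomQ (m + n - d - 1) ((m : ℤ) - i) /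
        ((m - 1).choose d : ℚ) := by
  obtain ⟨a, rfl⟩ : ∃ a, m = a + d + 1 := ⟨m - d - 1, by omega⟩
  obtain ⟨b, rfl⟩ : ∃ b, n = b + d + 1 := ⟨n - d - 1, by omega⟩
  have h1 : a + d + 1 + (b + d + 1) - 2 * d - 1 = a + b + 1 := by omega
  have h2 : a + d + 1 + (b + d + 1) - d - 1 = a + b + d + 1 := by omega
  have h3 : a + d + 1 - 1 = a + d := by omega
  rw [h1, h2, h3]
  have hCd : (((a+d).choose d : ℕ) : ℚ) ≠ 0 := by
    exact_mod_cast (Nat.choose_pos (by omega : d ≤ a + d)).ne'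
  rw [eq_div_iff hCd, Finset.sum_mul]
  have hterm : ∀ j ∈ Finset.range (d+1),
      binomQ (a+b+1) (((a+d+1:ℕ):ℤ) - (j:ℕ) - (i:ℕ)) * (-1)^j *
        ((d.choose j : ℚ) * ((b + d + 1 - d + j - 1).choose j : ℚ) / ((a+d).choose j : ℚ))
        * ((a+d).choose d : ℚ)
      = binomQ (a+b+1) ((((a+d+1:ℕ):ℤ) - (i:ℕ)) - (j:ℕ)) * (-1)^j *
        (((b+j).choose j : ℚ) * ((a + d - j).choose (d - j) : ℚ)) := by
    intro j hj
    rw [Finset.mem_range] at hj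
    have hb' : b + d + 1 - d + j - 1 = b + j := by omega
    have harg : ((a+d+1:ℕ):ℤ) - (j:ℕ) - (i:ℕ) = (((a+d+1:ℕ):ℤ) - (i:ℕ)) - (j:ℕ) := by ring
    have hnat : (a+d).choose d * d.choose j = (a+d).choose j * (a+d-j).choose (d-j) :=
      Nat.choose_mul (by omega)
    have hnatQ : ((a+d).choose d : ℚ) * (d.choose j : ℚ)
        = ((a+d).choose j : ℚ) * ((a+d-j).choose (d-j) : ℚ) := by exact_mod_cast hnat
    have hCj : (((a+d).choose j : ℕ) : ℚ) ≠ 0 := by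
      exact_mod_cast (Nat.choose_pos (by omega : j ≤ a + d)).ne'
    rw [hb', harg, mul_assoc]
    congr 1
    field_simp
    linear_combination (((b+j).choose j : ℚ)) * hnatQ
  rw [Finset.sum_congr rfl hterm]
  rw [key (a+b+d) a b d (((a+d+1:ℕ):ℤ) - (i:ℕ)) le_rfl]
  have hiarg : ((a:ℕ):ℤ) + ((d:ℕ):ℤ) - (((a+d+1:ℕ):ℤ) - (i:ℕ)) = ((i-1:ℕ):ℤ) := by omega
  rw [hiarg, Rq_natCast]
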